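/- Define f(α) = KL(h₀ ‖ h) − KL(h₀ ‖ h^(α)) for strictly positive probability mass functions h₀, h on a finite set Θ with h non-uniform, where h^(α) is the α-scaling of h. Then f(α) = (α − 1)·Σ_θ h₀(θ) log h(θ) − log(Σ_θ h(θ)^α), f is strictly concave on [0, ∞), f(1) = 0, and f'(1) = Σ_θ [h₀(θ) − h(θ)] log h(θ). -/

import Mathlib

open Real BigOperators

/-- With `f(α) = KL(h₀‖h) − KL(h₀‖h^(α))` for strictly positive pmfs
`h₀, h` on a finite set, `h` non-uniform: `f(α) = (α−1)·Σ h₀ log h − log(Σ h^α)`,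
`f` is strictly concave on `[0, ∞)`, `f(1) = 0`, and
`f'(1) = Σ [h₀ − h] log h`. -/
theorem kl_gain_formula_concave
    {Θ : Type*} [Fintype Θ] [Nonempty Θ]
    (h₀ h : Θ → ℝ)
    (h₀pos : ∀ θ, 0 < h₀ θ)
    (hpos : ∀ θ, 0 < h θ)
    (h₀sum : ∑ θ, h₀ θ = 1)
    (hsum : ∑ θ, h θ = 1)
    (hnonunif : ∃ θ₁ θ₂, h θ₁ ≠ h θ₂)
    (f : ℝ → ℝ)
    (hf : f = fun α =>
      (∑ θ, h₀ θ * Real.log (h₀ θ / h θ)) -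
        ∑ θ, h₀ θ * Real.log (h₀ θ / (h θ ^ α / ∑ θ', h θ' ^ α))) :
    (∀ α : ℝ, 0 ≤ α →
      f α = (α - 1) * (∑ θ, h₀ θ * Real.log (h θ)) -
        Real.log (∑ θ, h θ ^ α)) ∧
    StrictConcaveOn ℝ (Set.Ici 0) f ∧
    f 1 = 0 ∧
    HasDerivAt f (∑ θ, (h₀ θ - h θ) * Real.log (h θ)) 1 := by
  classical
  set c : ℝ := ∑ θ, h₀ θ * Real.log (h θ) with hc
  set Z : ℝ → ℝ := fun α => ∑ θ, h θ ^ α with hZdef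
  set S : ℝ → ℝ := fun α => ∑ θ, h θ ^ α * Real.log (h θ) with hSdef
  set T : ℝ → ℝ := fun α => ∑ θ, h θ ^ α * Real.log (h θ) ^ 2 with hTdef
  have Zpos : ∀ α, 0 < Z α := fun α =>
    Finset.sum_pos (fun θ _ => Real.rpow_pos_of_pos (hpos θ) α) Finset.univ_nonempty
  have Zne : ∀ α, Z α ≠ 0 := fun α => (Zpos α).ne'
  -- closed formula for f, valid for all real α
  have key : ∀ α : ℝ, f α = (α - 1) * c - Real.log (Z α) := by
    intro α
    have hterm : ∀ θ : Θ, h₀ θ * Real.log (h₀ θ / (h θ ^ α / ∑ θ', h θ' ^ α))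
        = h₀ θ * Real.log (h₀ θ) - α * (h₀ θ * Real.log (h θ))
          + h₀ θ * Real.log (Z α) := by
      intro θ
      have h1 : h θ ^ α ≠ 0 := (Real.rpow_pos_of_pos (hpos θ) α).ne'
      have hZa : (∑ θ', h θ' ^ α) = Z α := by simp [hZdef]
      rw [hZa, Real.log_div (h₀pos θ).ne' (div_ne_zero h1 (Zne α)),
        Real.log_div h1 (Zne α), Real.log_rpow (hpos θ)]
      ring
    have hterm1 : ∀ θ : Θ, h₀ θ * Real.log (h₀ θ / h θ)
        = h₀ θ * Real.log (h₀ θ) - h₀ θ * Real.log (h θ) := by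
      intro θ
      rw [Real.log_div (h₀pos θ).ne' (hpos θ).ne']; ring
    rw [hf]
    simp only [hterm, hterm1, Finset.sum_sub_distrib, Finset.sum_add_distrib,
      ← Finset.mul_sum, ← Finset.sum_mul, ← hc]
    rw [h₀sum]
    ring
  -- derivatives of Z and S
  have hZ : ∀ α : ℝ, HasDerivAt Z (S α) α := by
    intro α
    have : HasDerivAt (fun α : ℝ => ∑ θ, h θ ^ α)
        (∑ θ, h θ ^ α * Real.log (h θ)) α :=
      HasDerivAt.fun_sum fun θ _ =>
        (Real.hasStrictDerivAt_const_rpow (hpos θ) α).hasDerivAt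
    simpa [hZdef, hSdef] using this
  have hS : ∀ α : ℝ, HasDerivAt S (T α) α := by
    intro α
    have : HasDerivAt (fun α : ℝ => ∑ θ, h θ ^ α * Real.log (h θ))
        (∑ θ, h θ ^ α * Real.log (h θ) * Real.log (h θ)) α :=
      HasDerivAt.fun_sum fun θ _ =>
        ((Real.hasStrictDerivAt_const_rpow (hpos θ) α).hasDerivAt).mul_const _
    have hT : (∑ θ, h θ ^ α * Real.log (h θ) * Real.log (h θ)) = T α := by
      simp only [hTdef]
      exact Finset.sum_congr rfl fun θ _ => by ring
    rw [hT] at this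
    simpa [hSdef] using this
  -- derivative of f
  have hfd : ∀ α : ℝ, HasDerivAt f (c - S α / Z α) α := by
    intro α
    have hfg : f = fun α => (α - 1) * c - Real.log (Z α) := funext key
    have h1 : HasDerivAt (fun α : ℝ => (α - 1) * c - Real.log (Z α))
        (1 * c - S α / Z α) α :=
      (((hasDerivAt_id α).sub_const 1).mul_const c).sub ((hZ α).log (Zne α))
    rw [hfg]
    simpa using h1
  -- variance positivity
  obtain ⟨θ₁, θ₂, hθ⟩ := hnonunif
  have hlogne : Real.log (h θ₁) ≠ Real.log (h θ₂) := by
    intro e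
    apply hθ
    rw [← Real.exp_log (hpos θ₁), ← Real.exp_log (hpos θ₂), e]
  have hvar : ∀ α : ℝ, S α ^ 2 < T α * Z α := by
    intro α
    have apos : ∀ θ : Θ, 0 < h θ ^ α := fun θ => Real.rpow_pos_of_pos (hpos θ) α
    have hdouble :
        ∑ θ, ∑ θ', h θ ^ α * h θ' ^ α * (Real.log (h θ) - Real.log (h θ')) ^ 2
          = 2 * (T α * Z α - S α ^ 2) := by
      have inner : ∀ θ : Θ,
          ∑ θ', h θ ^ α * h θ' ^ α * (Real.log (h θ) - Real.log (h θ')) ^ 2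
            = (h θ ^ α * Real.log (h θ) ^ 2) * Z α + (h θ ^ α) * T α
              - (h θ ^ α * Real.log (h θ)) * (2 * S α) := by
        intro θ
        simp only [hZdef, hSdef, hTdef, Finset.mul_sum, ← Finset.sum_add_distrib,
          ← Finset.sum_sub_distrib]
        exact Finset.sum_congr rfl fun θ' _ => by ring
      rw [Finset.sum_congr rfl fun θ _ => inner θ]
      simp only [Finset.sum_sub_distrib, Finset.sum_add_distrib, ← Finset.sum_mul]
      simp only [hZdef, hSdef, hTdef]
      ring
    have hnn : ∀ θ θ' : Θ,
        0 ≤ h θ ^ α * h θ' ^ α * (Real.log (h θ) - Real.log (h θ')) ^ 2 := by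
      intro θ θ'
      exact mul_nonneg (mul_nonneg (apos θ).le (apos θ').le) (sq_nonneg _)
    have hpos12 : 0 < h θ₁ ^ α * h θ₂ ^ α * (Real.log (h θ₁) - Real.log (h θ₂)) ^ 2 := by
      have hne : Real.log (h θ₁) - Real.log (h θ₂) ≠ 0 := sub_ne_zero.mpr hlogne
      exact mul_pos (mul_pos (apos θ₁) (apos θ₂)) (pow_pos (abs_pos.mpr hne) 2 |>.trans_le (by rw [sq_abs]))
    have hle1 : h θ₁ ^ α * h θ₂ ^ α * (Real.log (h θ₁) - Real.log (h θ₂)) ^ 2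
        ≤ ∑ θ', h θ₁ ^ α * h θ' ^ α * (Real.log (h θ₁) - Real.log (h θ')) ^ 2 :=
      Finset.single_le_sum (fun θ' _ => hnn θ₁ θ') (Finset.mem_univ θ₂)
    have hle2 : (∑ θ', h θ₁ ^ α * h θ' ^ α * (Real.log (h θ₁) - Real.log (h θ')) ^ 2)
        ≤ ∑ θ, ∑ θ', h θ ^ α * h θ' ^ α * (Real.log (h θ) - Real.log (h θ')) ^ 2 :=
      Finset.single_le_sum
        (fun θ _ => Finset.sum_nonneg fun θ' _ => hnn θ θ') (Finset.mem_univ θ₁)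
    nlinarith [hdouble, hpos12, hle1, hle2]
  -- second derivative negative
  have hderiv : deriv f = fun α => c - S α / Z α := funext fun α => (hfd α).deriv
  have hsecond : ∀ α : ℝ, deriv^[2] f α < 0 := by
    intro α
    have hdiv : HasDerivAt (fun α => S α / Z α)
        ((T α * Z α - S α * S α) / Z α ^ 2) α := (hS α).div (hZ α) (Zne α)
    have h2 : HasDerivAt (deriv f) (0 - (T α * Z α - S α * S α) / Z α ^ 2) α := by
      rw [hderiv]
      exact (hasDerivAt_const α c).sub hdiv
    have h3 : deriv (deriv f) α = 0 - (T α * Z α - S α * S α) / Z α ^ 2 := h2.deriv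
    have h4 : deriv^[2] f α = deriv (deriv f) α := by
      simp [Function.iterate_succ, Function.comp]
    rw [h4, h3]
    have hpos' : 0 < (T α * Z α - S α * S α) / Z α ^ 2 := by
      apply div_pos _ (pow_pos (Zpos α) 2)
      nlinarith [hvar α]
    linarith
  refine ⟨?_, ?_, ?_, ?_⟩
  · intro α _
    rw [key α]
  · exact strictConcaveOn_of_deriv2_neg (convex_Ici 0)
      (fun α _ => ((hfd α).continuousAt).continuousWithinAt) (fun x _ => hsecond x)
  · have hZ1 : Z 1 = 1 := by simp [hZdef, Real.rpow_one, hsum]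
    rw [key 1, hZ1]
    simp
  · have hZ1 : Z 1 = 1 := by simp [hZdef, Real.rpow_one, hsum]
    have hS1 : S 1 = ∑ θ, h θ * Real.log (h θ) := by
      simp [hSdef, Real.rpow_one]
    have hval : c - S 1 / Z 1 = ∑ θ, (h₀ θ - h θ) * Real.log (h θ) := by
      rw [hZ1, hS1, div_one, hc, ← Finset.sum_sub_distrib]
      exact Finset.sum_congr rfl fun θ _ => by ring
    rw [← hval]
    exact hfd 1
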